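/- If a d-ideal A ∈ I(R) separates B_σ(R) (i.e. for every nonzero f ∈ B_σ(R) there exists ω ∈ A with ω(f) ≠ 0), then the extension map θ : Rep A → R is surjective; in fact for every π ∈ R the representation π_A of A is nondegenerate and θ(π_A) = π. -/

import Mathlib

open scoped MultiplierAlgebra
open Filter Topology

noncomputable section

/-- A jointly continuous normalized circle-valued 2-cocycle on `G`. -/
def IsNormalizedCocycle (G : Type) [Group G] [TopologicalSpace G] (σ : G → G → ℂ) : Prop :=
  (∀ x y, ‖σ x y‖ = 1) ∧
  (∀ x y z, σ x y * σ (x * y) z = σ y z * σ x (y * z)) ∧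
  (∀ x, σ x 1 = 1) ∧ (∀ x, σ 1 x = 1) ∧ (∀ x, σ x x⁻¹ = 1) ∧
  (∀ x y, (starRingEnd ℂ) (σ x y) = σ y⁻¹ x⁻¹) ∧
  Continuous fun p : G × G => σ p.1 p.2

/-- A family of bounded operators on a complex Hilbert space, indexed by `G`:
the carrier of a (possible) unitary `σ`-representation of `G`. -/
structure PreRep (G : Type) where
  H : Type
  [instNACG : NormedAddCommGroup H]
  [instIPS : InnerProductSpace ℂ H]
  [instComplete : CompleteSpace H]
  U : G → H →L[ℂ] H

attribute [instance] PreRep.instNACG PreRep.instIPS PreRep.instComplete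

/-- `ρ` is a unitary `σ`-representation of `G` (not necessarily continuous). -/
def PreRep.IsRep {G : Type} [Group G] (σ : G → G → ℂ) (ρ : PreRep G) : Prop :=
  (∀ x, ρ.U x ∈ unitary (ρ.H →L[ℂ] ρ.H)) ∧
  (∀ x y, ρ.U x ∘L ρ.U y = σ x y • ρ.U (x * y))

/-- Strong-operator continuity of a representation of `G`. -/
def PreRep.IsSOTCont {G : Type} [TopologicalSpace G] (ρ : PreRep G) : Prop :=
  ∀ ψ : ρ.H, Continuous fun x : G => ρ.U x ψ

/-- The set `Rep_σ G` of strong-operator continuous unitary `σ`-representations. -/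
def ContRepSet (G : Type) [Group G] [TopologicalSpace G] (σ : G → G → ℂ) : Set (PreRep G) :=
  {ρ | ρ.IsRep σ ∧ ρ.IsSOTCont}

/-- A nondegenerate Hilbert-space representation of a (non-unital) C*-algebra `L`. -/
structure RepOf (L : Type) [NonUnitalCStarAlgebra L] where
  H : Type
  [instNACG : NormedAddCommGroup H]
  [instIPS : InnerProductSpace ℂ H]
  [instComplete : CompleteSpace H]
  ρ : L →⋆ₙₐ[ℂ] (H →L[ℂ] H)
  nondeg : (Submodule.span ℂ {ψ : H | ∃ (a : L) (v : H), ρ a v = ψ}).topologicalClosure = ⊤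

attribute [instance] RepOf.instNACG RepOf.instIPS RepOf.instComplete

/-- A `σ`-group algebra for the pair `(G, R)`:  a C*-algebra `L` with a `σ`-homomorphism
`φ` of `G` into the unitaries of the multiplier algebra `𝓜(ℂ, L)`, such that the
extension map `θ` (defined on the nondegenerate representations `π` of `L` by
`θ(π)(g) (π(a)ψ) = π((φ g)·a) ψ`, i.e. the strict extension of `π` evaluated at `φ(g)`)
is injective with image exactly `R`. -/
structure SigmaGroupAlgebra (G : Type) [Group G] [TopologicalSpace G] (σ : G → G → ℂ)
    (R : Set (PreRep G)) where
  L : Type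
  [instL : NonUnitalCStarAlgebra L]
  φ : G → 𝓜(ℂ, L)
  φ_unitary : ∀ g, φ g ∈ unitary 𝓜(ℂ, L)
  φ_mul : ∀ g h, φ g * φ h = σ g h • φ (g * h)
  θU : (π : RepOf L) → G → (π.H →L[ℂ] π.H)
  θ_ext : ∀ (π : RepOf L) (g : G) (a : L) (ψ : π.H),
    θU π g (π.ρ a ψ) = π.ρ ((φ g).fst a) ψ
  θ_rep : ∀ π : RepOf L, (PreRep.mk π.H (θU π)).IsRep σ
  θ_inj : ∀ π₁ π₂ : RepOf L,
    PreRep.mk π₁.H (θU π₁) = PreRep.mk π₂.H (θU π₂) → π₁ = π₂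
  θ_range : {ρ : PreRep G | ∃ π : RepOf L, PreRep.mk π.H (θU π) = ρ} = R

attribute [instance] SigmaGroupAlgebra.instL

/-- the (Hilbert space) direct sum of two representation families -/
def PreRep.dsum {G : Type} (ρ₁ ρ₂ : PreRep G) : PreRep G where
  H := WithLp 2 (ρ₁.H × ρ₂.H)
  U x := ((WithLp.prodContinuousLinearEquiv 2 ℂ ρ₁.H ρ₂.H).symm :
            (ρ₁.H × ρ₂.H) →L[ℂ] WithLp 2 (ρ₁.H × ρ₂.H)).comp
    (((ρ₁.U x).prodMap (ρ₂.U x)).comp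
      ((WithLp.prodContinuousLinearEquiv 2 ℂ ρ₁.H ρ₂.H :
        WithLp 2 (ρ₁.H × ρ₂.H) →L[ℂ] ρ₁.H × ρ₂.H)))

section FunctionSpaces

variable {G : Type} [Group G] [TopologicalSpace G]

/-- The norm of `ν = Σ c_x δ_x` in the twisted discrete group C*-algebra `C*_σ(G_d)`:
the supremum of the operator norms over all unitary `σ`-representations. -/
def discNorm (σ : G → G → ℂ) (ν : G →₀ ℂ) : ℝ :=
  ⨆ ρ : {ρ : PreRep G // ρ.IsRep σ}, ‖ν.sum fun x c => c • (ρ.1.U x)‖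

/-- The norm `‖f‖_*` of a function on `G`, as a functional on `C*_σ(G_d)`:
`‖f‖_* = sup { |f̌(A)| : A ∈ C*_σ(G_d), ‖A‖ ≤ 1 }`, where it suffices to let `A` run
over the dense unit ball of the twisted group ring. -/
def starNorm (σ : G → G → ℂ) (f : G → ℂ) : ℝ :=
  ⨆ ν : {ν : G →₀ ℂ // discNorm σ ν ≤ 1}, ‖ν.1.sum fun x c => c * f x‖

/-- The supremum norm `‖f‖_∞`. -/
def supNorm (f : G → ℂ) : ℝ := ⨆ x : G, ‖f x‖

/-- `B_σ(R)`: the set of coefficient functions of representations in `R`. -/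
def BCoef (σ : G → G → ℂ) (R : Set (PreRep G)) : Set (G → ℂ) :=
  {f | ∃ ρ ∈ R, ∃ ψ φ : ρ.H, f = fun x => (inner ℂ ψ (ρ.U x φ) : ℂ)}

/-- left `σ`-translation `(λ_x f)(y) = σ(x,y) f(xy)`. -/
def ltrans (σ : G → G → ℂ) (x : G) (f : G → ℂ) : G → ℂ := fun y => σ x y * f (x * y)

/-- right `σ`-translation `(ρ_x f)(y) = σ(y,x) f(yx)`. -/
def rtrans (σ : G → G → ℂ) (x : G) (f : G → ℂ) : G → ℂ := fun y => σ y x * f (y * x)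

/-- the involution `f*(x) = conj (f (x⁻¹))`. -/
def finv (f : G → ℂ) : G → ℂ := fun x => (starRingEnd ℂ) (f x⁻¹)

/-- `J_σ(R)`: the completion of `B_σ(R)` in the norm `‖·‖_*`, realized concretely as the
set of functions approximable in `‖·‖_*` by elements of `B_σ(R)`. -/
def Jset (σ : G → G → ℂ) (R : Set (PreRep G)) : Set (G → ℂ) :=
  {f | ∀ ε > (0:ℝ), ∃ g ∈ BCoef σ R, starNorm σ (f - g) < ε}

/-- `K_σ(R)`: the completion of `B_σ(R)` in the norm `‖·‖_∞`, realized concretely as the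
set of functions uniformly approximable by elements of `B_σ(R)`. -/
def Kset (σ : G → G → ℂ) (R : Set (PreRep G)) : Set (G → ℂ) :=
  {f | ∀ ε > (0:ℝ), ∃ g ∈ BCoef σ R, supNorm (f - g) < ε}

end FunctionSpaces

section Packages

/-- A realization of the Banach space `J_σ(R)`: the completion of the space `B_σ(R)` of
coefficient functions in the norm `‖·‖_*`, together with the left and right
`σ`-translations, the involution, and the point evaluations `δ_x ∈ J_σ(R)*`. -/
structure JPackage (G : Type) [Group G] [TopologicalSpace G] (σ : G → G → ℂ)
    (R : Set (PreRep G)) where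
  /-- `B_σ(R)` as a subspace of the functions on `G` -/
  Bmod : Submodule ℂ (G → ℂ)
  Bmod_eq : (Bmod : Set (G → ℂ)) = BCoef σ R
  /-- the Banach space `J_σ(R)` -/
  J : Type
  [instJ1 : NormedAddCommGroup J]
  [instJ2 : NormedSpace ℂ J]
  [instJ3 : CompleteSpace J]
  /-- the canonical inclusion of `B_σ(R)` in `J_σ(R)`, isometric w.r.t. `‖·‖_*` and
  with dense range -/
  ι : Bmod →ₗ[ℂ] J
  ι_norm : ∀ f : Bmod, ‖ι f‖ = starNorm σ (f : G → ℂ)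
  denseRange : DenseRange fun f : Bmod => ι f
  /-- left `σ`-translation on `B_σ(R)` -/
  lamB : G → Bmod → Bmod
  lamB_spec : ∀ (x : G) (f : Bmod), ((lamB x f : Bmod) : G → ℂ) = ltrans σ x (f : G → ℂ)
  /-- right `σ`-translation on `B_σ(R)` -/
  rhoB : G → Bmod → Bmod
  rhoB_spec : ∀ (x : G) (f : Bmod), ((rhoB x f : Bmod) : G → ℂ) = rtrans σ x (f : G → ℂ)
  /-- the involution `f ↦ f*` on `B_σ(R)` -/
  starB : Bmod → Bmod
  starB_spec : ∀ f : Bmod, ((starB f : Bmod) : G → ℂ) = finv (f : G → ℂ)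
  /-- the point evaluations `δ_x : f ↦ f(x)`, as elements of `J_σ(R)*` -/
  delta : G → (J →L[ℂ] ℂ)
  delta_spec : ∀ (x : G) (f : Bmod), delta x (ι f) = (f : G → ℂ) x

attribute [instance] JPackage.instJ1 JPackage.instJ2 JPackage.instJ3

variable {G : Type} [Group G] [TopologicalSpace G] {σ : G → G → ℂ} {R : Set (PreRep G)}

/-- `J_σ(R)` together with the convolution and involution on its dual `J_σ(R)*`
(established in Theorem 3.3 of the paper), and the representations `ω ↦ π(ω)` of
`J_σ(R)*` associated to the elements `π ∈ R` (Lemma 3.1). -/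
structure ConvPackage (G : Type) [Group G] [TopologicalSpace G] (σ : G → G → ℂ)
    (R : Set (PreRep G)) extends JPackage G σ R where
  /-- the convolution `(ξ*ω)(f) = ξ_x(ω_y(σ(x,y)f(xy))) = ξ(f^ω)` on `J_σ(R)*` -/
  conv : (J →L[ℂ] ℂ) → (J →L[ℂ] ℂ) → (J →L[ℂ] ℂ)
  conv_spec : ∀ (ξ ω : J →L[ℂ] ℂ) (f g : Bmod),
    ((g : G → ℂ) = fun x => ω (ι (lamB x f))) → conv ξ ω (ι f) = ξ (ι g)
  /-- the involution `ω*(f) = conj (ω (f*))` on `J_σ(R)*` -/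
  invol : (J →L[ℂ] ℂ) → (J →L[ℂ] ℂ)
  invol_spec : ∀ (ω : J →L[ℂ] ℂ) (f : Bmod),
    invol ω (ι f) = (starRingEnd ℂ) (ω (ι (starB f)))
  /-- for `ρ ∈ R` and `ω ∈ J_σ(R)*`, the operator `ρ(ω)` with
  `⟨ψ, ρ(ω) φ⟩ = ω(x ↦ ⟨ψ, ρ(x) φ⟩)` -/
  opRep : (ρ : PreRep G) → ρ ∈ R → (J →L[ℂ] ℂ) → (ρ.H →L[ℂ] ρ.H)
  opRep_spec : ∀ (ρ : PreRep G) (hρ : ρ ∈ R) (ω : J →L[ℂ] ℂ) (ψ φ : ρ.H) (f : Bmod),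
    ((f : G → ℂ) = fun x => (inner ℂ ψ (ρ.U x φ) : ℂ)) →
      (inner ℂ ψ (opRep ρ hρ ω φ) : ℂ) = ω (ι f)

/-- A d-ideal of `J_σ(R)*`: a nonzero norm-closed *-subalgebra `S` with
`δ_x * S ⊆ S ⊇ S * δ_x` for all `x ∈ G`. -/
structure IsDIdealSet (P : ConvPackage G σ R) (S : Set (P.J →L[ℂ] ℂ)) : Prop where
  nonzero : ∃ ω ∈ S, ω ≠ 0
  zero_mem : (0 : P.J →L[ℂ] ℂ) ∈ S
  add_mem : ∀ ω₁ ∈ S, ∀ ω₂ ∈ S, ω₁ + ω₂ ∈ S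
  smul_mem : ∀ (c : ℂ), ∀ ω ∈ S, c • ω ∈ S
  isClosed : IsClosed S
  conv_mem : ∀ ω₁ ∈ S, ∀ ω₂ ∈ S, P.conv ω₁ ω₂ ∈ S
  invol_mem : ∀ ω ∈ S, P.invol ω ∈ S
  delta_conv_mem : ∀ (x : G), ∀ ω ∈ S, P.conv (P.delta x) ω ∈ S
  conv_delta_mem : ∀ (x : G), ∀ ω ∈ S, P.conv ω (P.delta x) ∈ S

/-- A nondegenerate Hilbert space representation of the subalgebra `S ⊆ J_σ(R)*`
(normalized to vanish off `S`). -/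
structure DRep (P : ConvPackage G σ R) (S : Set (P.J →L[ℂ] ℂ)) where
  H : Type
  [instNACG : NormedAddCommGroup H]
  [instIPS : InnerProductSpace ℂ H]
  [instComplete : CompleteSpace H]
  ρ : (P.J →L[ℂ] ℂ) → (H →L[ℂ] H)
  zero_off : ∀ ω ∉ S, ρ ω = 0
  map_add : ∀ ω₁ ∈ S, ∀ ω₂ ∈ S, ρ (ω₁ + ω₂) = ρ ω₁ + ρ ω₂
  map_smul : ∀ (c : ℂ), ∀ ω ∈ S, ρ (c • ω) = c • ρ ω
  map_mul : ∀ ω₁ ∈ S, ∀ ω₂ ∈ S, ρ (P.conv ω₁ ω₂) = ρ ω₁ ∘L ρ ω₂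
  map_star : ∀ ω ∈ S, ρ (P.invol ω) = star (ρ ω)
  bounded : ∀ ω ∈ S, ‖ρ ω‖ ≤ ‖ω‖
  nondeg : (Submodule.span ℂ
    {ψ : H | ∃ ω ∈ S, ∃ v : H, ρ ω v = ψ}).topologicalClosure = ⊤

attribute [instance] DRep.instNACG DRep.instIPS DRep.instComplete

/-- `V = θ(π)` for a nondegenerate representation `π` of the subalgebra `S ⊆ J_σ(R)*`:
the unitary `σ`-representation of `G` determined by `V(x) π(ω)ψ = π(δ_x * ω)ψ`. -/
def DRep.IsExtOf {P : ConvPackage G σ R} {S : Set (P.J →L[ℂ] ℂ)} (π : DRep P S)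
    (V : G → (π.H →L[ℂ] π.H)) : Prop :=
  (PreRep.mk π.H V).IsRep σ ∧
  ∀ (x : G), ∀ ω ∈ S, ∀ ψ : π.H, V x (π.ρ ω ψ) = π.ρ (P.conv (P.delta x) ω) ψ

end Packages

section AuxProofs

variable {G : Type} [Group G] [TopologicalSpace G] {σ : G → G → ℂ} {R : Set (PreRep G)}

lemma aux_U_one {ρ : PreRep G} (hσ : IsNormalizedCocycle G σ) (h : ρ.IsRep σ) :
    ρ.U 1 = 1 := by
  have h2 : ρ.U 1 * ρ.U 1 = ρ.U 1 := by
    have := h.2 1 1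
    rw [mul_one, hσ.2.2.1 1, one_smul] at this
    exact this
  have hu : star (ρ.U 1) * ρ.U 1 = 1 := (Unitary.mem_iff.mp (h.1 1)).1
  calc ρ.U 1 = 1 * ρ.U 1 := (one_mul _).symm
    _ = (star (ρ.U 1) * ρ.U 1) * ρ.U 1 := by rw [hu]
    _ = star (ρ.U 1) * (ρ.U 1 * ρ.U 1) := by rw [mul_assoc]
    _ = star (ρ.U 1) * ρ.U 1 := by rw [h2]
    _ = 1 := hu

lemma aux_star_U {ρ : PreRep G} (hσ : IsNormalizedCocycle G σ) (h : ρ.IsRep σ) (x : G) :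
    star (ρ.U x) = ρ.U x⁻¹ := by
  have h2 : ρ.U x * ρ.U x⁻¹ = 1 := by
    have := h.2 x x⁻¹
    rw [hσ.2.2.2.2.1 x, one_smul, mul_inv_cancel] at this
    rw [show ρ.U x * ρ.U x⁻¹ = ρ.U x ∘L ρ.U x⁻¹ from rfl, this, aux_U_one hσ h]
  have hu : star (ρ.U x) * ρ.U x = 1 := (Unitary.mem_iff.mp (h.1 x)).1
  calc star (ρ.U x) = star (ρ.U x) * 1 := (mul_one _).symm
    _ = star (ρ.U x) * (ρ.U x * ρ.U x⁻¹) := by rw [h2]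
    _ = (star (ρ.U x) * ρ.U x) * ρ.U x⁻¹ := by rw [mul_assoc]
    _ = 1 * ρ.U x⁻¹ := by rw [hu]
    _ = ρ.U x⁻¹ := one_mul _

variable (P : ConvPackage G σ R)

lemma coef_mem {ρ : PreRep G} (hρ : ρ ∈ R) (ψ φ : ρ.H) :
    (fun x => (inner ℂ ψ (ρ.U x φ) : ℂ)) ∈ P.Bmod := by
  rw [← SetLike.mem_coe, P.Bmod_eq]
  exact ⟨ρ, hρ, ψ, φ, rfl⟩

/-- the coefficient function of `(ψ, φ)` as an element of `B_σ(R)` -/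
def coefB {ρ : PreRep G} (hρ : ρ ∈ R) (ψ φ : ρ.H) : P.Bmod :=
  ⟨fun x => (inner ℂ ψ (ρ.U x φ) : ℂ), coef_mem P hρ ψ φ⟩

lemma coefB_coe {ρ : PreRep G} (hρ : ρ ∈ R) (ψ φ : ρ.H) :
    ((coefB P hρ ψ φ : P.Bmod) : G → ℂ) = fun x => (inner ℂ ψ (ρ.U x φ) : ℂ) := rfl

lemma opRep_inner {ρ : PreRep G} (hρ : ρ ∈ R) (ω : P.J →L[ℂ] ℂ) (ψ φ : ρ.H) :
    (inner ℂ ψ (P.opRep ρ hρ ω φ) : ℂ) = ω (P.ι (coefB P hρ ψ φ)) :=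
  P.opRep_spec ρ hρ ω ψ φ _ rfl

lemma lamB_coefB (hσ : IsNormalizedCocycle G σ) {ρ : PreRep G} (h : ρ.IsRep σ)
    (hρ : ρ ∈ R) (y : G) (ψ φ : ρ.H) :
    P.lamB y (coefB P hρ ψ φ) = coefB P hρ (star (ρ.U y) ψ) φ := by
  apply Subtype.ext
  show ((P.lamB y (coefB P hρ ψ φ) : P.Bmod) : G → ℂ) = _
  rw [P.lamB_spec, coefB_coe, coefB_coe]
  funext z
  show σ y z * (inner ℂ ψ (ρ.U (y * z) φ) : ℂ) = _
  rw [ContinuousLinearMap.star_eq_adjoint, ContinuousLinearMap.adjoint_inner_left,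
    ← ContinuousLinearMap.comp_apply, h.2 y z, ContinuousLinearMap.smul_apply,
    inner_smul_right]

lemma coefB_opRep_eq (hσ : IsNormalizedCocycle G σ) {ρ : PreRep G} (h : ρ.IsRep σ)
    (hρ : ρ ∈ R) (ω : P.J →L[ℂ] ℂ) (ψ φ : ρ.H) :
    ((coefB P hρ ψ (P.opRep ρ hρ ω φ) : P.Bmod) : G → ℂ)
      = fun y => ω (P.ι (P.lamB y (coefB P hρ ψ φ))) := by
  funext y
  rw [coefB_coe, lamB_coefB P hσ h hρ y ψ φ, ← opRep_inner,
    ContinuousLinearMap.star_eq_adjoint, ContinuousLinearMap.adjoint_inner_left]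

lemma opRep_conv (hσ : IsNormalizedCocycle G σ) {ρ : PreRep G} (h : ρ.IsRep σ)
    (hρ : ρ ∈ R) (ξ ω : P.J →L[ℂ] ℂ) :
    P.opRep ρ hρ (P.conv ξ ω) = P.opRep ρ hρ ξ ∘L P.opRep ρ hρ ω := by
  ext φ
  apply ext_inner_left ℂ
  intro ψ
  rw [ContinuousLinearMap.comp_apply, opRep_inner, opRep_inner]
  exact P.conv_spec ξ ω (coefB P hρ ψ φ) (coefB P hρ ψ (P.opRep ρ hρ ω φ))
    (coefB_opRep_eq P hσ h hρ ω ψ φ)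

lemma opRep_delta_conv (hσ : IsNormalizedCocycle G σ) {ρ : PreRep G} (h : ρ.IsRep σ)
    (hρ : ρ ∈ R) (x : G) (ω : P.J →L[ℂ] ℂ) (φ : ρ.H) :
    ρ.U x (P.opRep ρ hρ ω φ) = P.opRep ρ hρ (P.conv (P.delta x) ω) φ := by
  apply ext_inner_left ℂ
  intro ψ
  rw [opRep_inner,
    P.conv_spec (P.delta x) ω (coefB P hρ ψ φ) (coefB P hρ ψ (P.opRep ρ hρ ω φ))
      (coefB_opRep_eq P hσ h hρ ω ψ φ),
    P.delta_spec]
  rfl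

lemma opRep_add {ρ : PreRep G} (hρ : ρ ∈ R) (ω₁ ω₂ : P.J →L[ℂ] ℂ) :
    P.opRep ρ hρ (ω₁ + ω₂) = P.opRep ρ hρ ω₁ + P.opRep ρ hρ ω₂ := by
  ext φ
  apply ext_inner_left ℂ
  intro ψ
  rw [ContinuousLinearMap.add_apply, inner_add_right, opRep_inner, opRep_inner, opRep_inner,
    ContinuousLinearMap.add_apply]

lemma opRep_smul {ρ : PreRep G} (hρ : ρ ∈ R) (c : ℂ) (ω : P.J →L[ℂ] ℂ) :
    P.opRep ρ hρ (c • ω) = c • P.opRep ρ hρ ω := by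
  ext φ
  apply ext_inner_left ℂ
  intro ψ
  rw [ContinuousLinearMap.smul_apply, inner_smul_right, opRep_inner, opRep_inner,
    ContinuousLinearMap.smul_apply, smul_eq_mul]

lemma starB_coefB (hσ : IsNormalizedCocycle G σ) {ρ : PreRep G} (h : ρ.IsRep σ)
    (hρ : ρ ∈ R) (ψ φ : ρ.H) :
    P.starB (coefB P hρ ψ φ) = coefB P hρ φ ψ := by
  apply Subtype.ext
  show ((P.starB (coefB P hρ ψ φ) : P.Bmod) : G → ℂ) = _
  rw [P.starB_spec, coefB_coe, coefB_coe]
  funext x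
  show (starRingEnd ℂ) (inner ℂ ψ (ρ.U x⁻¹ φ) : ℂ) = (inner ℂ φ (ρ.U x ψ) : ℂ)
  rw [inner_conj_symm, ← aux_star_U hσ h x, ContinuousLinearMap.star_eq_adjoint,
    ContinuousLinearMap.adjoint_inner_left]

lemma opRep_invol (hσ : IsNormalizedCocycle G σ) {ρ : PreRep G} (h : ρ.IsRep σ)
    (hρ : ρ ∈ R) (ω : P.J →L[ℂ] ℂ) :
    P.opRep ρ hρ (P.invol ω) = star (P.opRep ρ hρ ω) := by
  ext φ
  apply ext_inner_left ℂ
  intro ψ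
  rw [opRep_inner, P.invol_spec, starB_coefB P hσ h hρ, ← opRep_inner, inner_conj_symm,
    ContinuousLinearMap.star_eq_adjoint, ContinuousLinearMap.adjoint_inner_right]

lemma unitary_norm_le' {H : Type} [NormedAddCommGroup H] [InnerProductSpace ℂ H]
    [CompleteSpace H] {u : H →L[ℂ] H} (hu : u ∈ unitary (H →L[ℂ] H)) : ‖u‖ ≤ 1 := by
  have h1 : star u * u = 1 := (Unitary.mem_iff.mp hu).1
  have h2 : ‖star u * u‖ = ‖u‖ * ‖u‖ := CStarRing.norm_star_mul_self
  rw [h1] at h2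
  have h3 : ‖(1 : H →L[ℂ] H)‖ ≤ 1 := by
    rw [ContinuousLinearMap.one_def]; exact ContinuousLinearMap.norm_id_le
  nlinarith [norm_nonneg u]

lemma norm_opsum_le {ρ : PreRep G} (h : ρ.IsRep σ) (ν : G →₀ ℂ) :
    ‖ν.sum fun x c => c • ρ.U x‖ ≤ ν.sum fun _ c => ‖c‖ := by
  rw [Finsupp.sum, Finsupp.sum]
  refine (norm_sum_le _ _).trans ?_
  refine Finset.sum_le_sum fun x _ => ?_
  rw [norm_smul]
  calc ‖ν x‖ * ‖ρ.U x‖ ≤ ‖ν x‖ * 1 :=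
        mul_le_mul_of_nonneg_left (unitary_norm_le' (h.1 x)) (norm_nonneg _)
    _ = ‖ν x‖ := mul_one _

lemma norm_le_discNorm {ρ : PreRep G} (h : ρ.IsRep σ) (ν : G →₀ ℂ) :
    ‖ν.sum fun x c => c • ρ.U x‖ ≤ discNorm σ ν := by
  have hb : BddAbove (Set.range fun ρ' : {ρ' : PreRep G // ρ'.IsRep σ} =>
      ‖ν.sum fun x c => c • ρ'.1.U x‖) := by
    refine ⟨ν.sum fun _ c => ‖c‖, ?_⟩
    rintro - ⟨ρ', rfl⟩
    exact norm_opsum_le ρ'.2 ν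
  exact le_ciSup hb (⟨ρ, h⟩ : {ρ' : PreRep G // ρ'.IsRep σ})

lemma starNorm_coef_le {ρ : PreRep G} (h : ρ.IsRep σ) (ψ φ : ρ.H) :
    starNorm σ (fun x => (inner ℂ ψ (ρ.U x φ) : ℂ)) ≤ ‖ψ‖ * ‖φ‖ := by
  refine Real.iSup_le ?_ (by positivity)
  rintro ⟨ν, hν⟩
  have key : (ν.sum fun x c => c * (inner ℂ ψ (ρ.U x φ) : ℂ))
      = inner ℂ ψ ((ν.sum fun x c => c • ρ.U x) φ) := by
    rw [Finsupp.sum, Finsupp.sum, ContinuousLinearMap.sum_apply, inner_sum]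
    refine Finset.sum_congr rfl fun x _ => ?_
    rw [ContinuousLinearMap.smul_apply, inner_smul_right]
  show ‖ν.sum fun x c => c * (inner ℂ ψ (ρ.U x φ) : ℂ)‖ ≤ ‖ψ‖ * ‖φ‖
  rw [key]
  calc ‖(inner ℂ ψ ((ν.sum fun x c => c • ρ.U x) φ) : ℂ)‖
      ≤ ‖ψ‖ * ‖(ν.sum fun x c => c • ρ.U x) φ‖ := norm_inner_le_norm _ _
    _ ≤ ‖ψ‖ * (‖ν.sum fun x c => c • ρ.U x‖ * ‖φ‖) :=
        mul_le_mul_of_nonneg_left ((ν.sum fun x c => c • ρ.U x).le_opNorm φ) (norm_nonneg _)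
    _ ≤ ‖ψ‖ * (1 * ‖φ‖) := by
        have h1 : ‖ν.sum fun x c => c • ρ.U x‖ ≤ 1 := (norm_le_discNorm h ν).trans hν
        exact mul_le_mul_of_nonneg_left
          (mul_le_mul_of_nonneg_right h1 (norm_nonneg _)) (norm_nonneg _)
    _ = ‖ψ‖ * ‖φ‖ := by ring

lemma opRep_norm_le {ρ : PreRep G} (h : ρ.IsRep σ) (hρ : ρ ∈ R) (ω : P.J →L[ℂ] ℂ) :
    ‖P.opRep ρ hρ ω‖ ≤ ‖ω‖ := by
  refine ContinuousLinearMap.opNorm_le_bound _ (norm_nonneg ω) fun φ => ?_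
  set v := P.opRep ρ hρ ω φ with hv
  have h1 : (inner ℂ v v : ℂ) = ω (P.ι (coefB P hρ v φ)) := opRep_inner P hρ ω v φ
  have h2 : ‖v‖ * ‖v‖ ≤ ‖ω‖ * (‖v‖ * ‖φ‖) := by
    have e1 : ‖(inner ℂ v v : ℂ)‖ = ‖v‖ * ‖v‖ := by
      rw [inner_self_eq_norm_sq_to_K (𝕜 := ℂ) v, norm_pow, RCLike.norm_ofReal,
        abs_of_nonneg (norm_nonneg v), sq]
    have e2 : ‖ω (P.ι (coefB P hρ v φ))‖ ≤ ‖ω‖ * (‖v‖ * ‖φ‖) := by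
      calc ‖ω (P.ι (coefB P hρ v φ))‖ ≤ ‖ω‖ * ‖P.ι (coefB P hρ v φ)‖ := ω.le_opNorm _
        _ ≤ ‖ω‖ * (‖v‖ * ‖φ‖) := by
            refine mul_le_mul_of_nonneg_left ?_ (norm_nonneg ω)
            rw [P.ι_norm]
            exact starNorm_coef_le h v φ
    rw [← e1, h1]
    exact e2
  rcases eq_or_lt_of_le (norm_nonneg v) with h0 | h0
  · rw [← h0]; positivity
  · have h2' : ‖v‖ * ‖v‖ ≤ (‖ω‖ * ‖φ‖) * ‖v‖ := by nlinarith
    exact le_of_mul_le_mul_right h2' h0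

lemma opRep_nondeg (hσ : IsNormalizedCocycle G σ) {ρ : PreRep G} (h : ρ.IsRep σ)
    (hρ : ρ ∈ R) (S : Set (P.J →L[ℂ] ℂ))
    (hsep : ∀ f : P.Bmod, (f : G → ℂ) ≠ 0 → ∃ ω ∈ S, ω (P.ι f) ≠ 0) :
    (Submodule.span ℂ {ψ : ρ.H | ∃ ω ∈ S, ∃ v : ρ.H,
      P.opRep ρ hρ ω v = ψ}).topologicalClosure = ⊤ := by
  rw [Submodule.topologicalClosure_eq_top_iff, Submodule.eq_bot_iff]
  intro ψ hψ
  have key : ∀ v : ρ.H, (fun x => (inner ℂ ψ (ρ.U x v) : ℂ)) = 0 := by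
    intro v
    by_contra hc
    obtain ⟨ω, hω, hne⟩ := hsep (coefB P hρ ψ v) hc
    apply hne
    rw [← opRep_inner P hρ ω ψ v]
    have hmem : P.opRep ρ hρ ω v ∈ Submodule.span ℂ {ψ' : ρ.H | ∃ ω' ∈ S, ∃ v' : ρ.H,
        P.opRep ρ hρ ω' v' = ψ'} := Submodule.subset_span ⟨ω, hω, v, rfl⟩
    have h0 : (inner ℂ (P.opRep ρ hρ ω v) ψ : ℂ) = 0 :=
      (Submodule.mem_orthogonal _ ψ).mp hψ _ hmem
    rw [← inner_conj_symm, h0, map_zero]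
  have h1 := congrFun (key ψ) 1
  simp only [aux_U_one hσ h, ContinuousLinearMap.one_apply, Pi.zero_apply] at h1
  exact inner_self_eq_zero.mp h1

end AuxProofs

/-- If a d-ideal `A ∈ I(R)` separates `B_σ(R)`, then the extension map
`θ : Rep A → R` is surjective; in fact for every `π ∈ R` the representation `π_A` of `A`
is nondegenerate and `θ(π_A) = π`. -/
theorem stmt_12 {G : Type} [Group G] [TopologicalSpace G] [IsTopologicalGroup G] [T2Space G]
    (σ : G → G → ℂ) (hσ : IsNormalizedCocycle G σ)
    (R : Set (PreRep G)) (hR : ∀ ρ ∈ R, ρ.IsRep σ)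
    (hDS : ∀ ρ₁ ∈ R, ∀ ρ₂ ∈ R, ρ₁.dsum ρ₂ ∈ R)
    (P : ConvPackage G σ R)
    (S : Set (P.J →L[ℂ] ℂ)) (hS : IsDIdealSet P S)
    -- `A ∈ I(R)`: the extension of every nondegenerate representation of `A` lies in `R`
    (hI : ∀ (π : DRep P S) (V : G → (π.H →L[ℂ] π.H)), π.IsExtOf V → PreRep.mk π.H V ∈ R)
    -- `A` separates `B_σ(R)`
    (hsep : ∀ f : P.Bmod, (f : G → ℂ) ≠ 0 → ∃ ω ∈ S, ω (P.ι f) ≠ 0) :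
    -- for every `π ∈ R`, the representation `π_A : ω ↦ π(ω)` of `A` is nondegenerate
    -- and `θ(π_A) = π`
    (∀ (ρ : PreRep G) (hρ : ρ ∈ R),
      ((Submodule.span ℂ {ψ : ρ.H | ∃ ω ∈ S, ∃ v : ρ.H,
        P.opRep ρ hρ ω v = ψ}).topologicalClosure = ⊤) ∧
      (∀ (x : G), ∀ ω ∈ S, ∀ ψ : ρ.H,
        ρ.U x (P.opRep ρ hρ ω ψ) = P.opRep ρ hρ (P.conv (P.delta x) ω) ψ)) ∧
    -- hence `θ : Rep A → R` is surjective
    (∀ ρ ∈ R, ∃ (π : DRep P S) (V : G → (π.H →L[ℂ] π.H)),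
      π.IsExtOf V ∧ PreRep.mk π.H V = ρ) := by
  classical
  have main : ∀ (ρ : PreRep G) (hρ : ρ ∈ R),
      ((Submodule.span ℂ {ψ : ρ.H | ∃ ω ∈ S, ∃ v : ρ.H,
        P.opRep ρ hρ ω v = ψ}).topologicalClosure = ⊤) ∧
      (∀ (x : G), ∀ ω ∈ S, ∀ ψ : ρ.H,
        ρ.U x (P.opRep ρ hρ ω ψ) = P.opRep ρ hρ (P.conv (P.delta x) ω) ψ) := by
    intro ρ hρ
    refine ⟨opRep_nondeg P hσ (hR ρ hρ) hρ S hsep, fun x ω _ ψ => ?_⟩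
    exact opRep_delta_conv P hσ (hR ρ hρ) hρ x ω ψ
  refine ⟨main, fun ρ hρ => ?_⟩
  have h := hR ρ hρ
  have hset : {ψ : ρ.H | ∃ ω ∈ S, ∃ v : ρ.H,
      (if ω ∈ S then P.opRep ρ hρ ω else 0) v = ψ}
      = {ψ : ρ.H | ∃ ω ∈ S, ∃ v : ρ.H, P.opRep ρ hρ ω v = ψ} := by
    ext ψ
    constructor
    · rintro ⟨ω, hω, v, hv⟩
      exact ⟨ω, hω, v, by rwa [if_pos hω] at hv⟩
    · rintro ⟨ω, hω, v, hv⟩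
      exact ⟨ω, hω, v, by rwa [if_pos hω]⟩
  refine ⟨{ H := ρ.H
            ρ := fun ω => if ω ∈ S then P.opRep ρ hρ ω else 0
            zero_off := fun ω hω => if_neg hω
            map_add := fun ω₁ h₁ ω₂ h₂ => by
              simp only [if_pos h₁, if_pos h₂, if_pos (hS.add_mem ω₁ h₁ ω₂ h₂), opRep_add]
            map_smul := fun c ω hω => by
              simp only [if_pos hω, if_pos (hS.smul_mem c ω hω), opRep_smul]
            map_mul := fun ω₁ h₁ ω₂ h₂ => by
              simp only [if_pos h₁, if_pos h₂, if_pos (hS.conv_mem ω₁ h₁ ω₂ h₂),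
                opRep_conv P hσ h hρ]
            map_star := fun ω hω => by
              simp only [if_pos hω, if_pos (hS.invol_mem ω hω), opRep_invol P hσ h hρ]
            bounded := fun ω hω => by
              simp only [if_pos hω]; exact opRep_norm_le P h hρ ω
            nondeg := by
              rw [hset]; exact opRep_nondeg P hσ h hρ S hsep }, ρ.U, ⟨?_, ?_⟩, ?_⟩
  · exact hR ρ hρ
  · intro x ω hω ψ
    show ρ.U x ((if ω ∈ S then P.opRep ρ hρ ω else 0) ψ)
        = (if P.conv (P.delta x) ω ∈ S then P.opRep ρ hρ (P.conv (P.delta x) ω) else 0) ψ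
    rw [if_pos hω, if_pos (hS.delta_conv_mem x ω hω)]
    exact opRep_delta_conv P hσ h hρ x ω ψ
  · rfl

end
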